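/- The number of conjugacy classes of G contained in the coset Hx equals the number of conjugacy classes of G contained in H that do not split under the conjugation action of H (equivalently, classes of elements h in H with H·C_G(h) = G). -/

import Mathlib

open Finset Subgroup QuotientGroup

private lemma aux_class_eq {G : Type*} [Group G] [Finite G] (g : G) :
    Nat.card (ConjClasses.mk g).carrier * Nat.card (Subgroup.centralizer {g} : Subgroup G)
      = Nat.card G := by
  classical
  have := Fintype.ofFinite G
  have h1 : Nat.card (Subgroup.centralizer {g} : Subgroup G)
      = Nat.card (MulAction.stabilizer (ConjAct G) g) :=
    Nat.card_congr (Equiv.subtypeEquiv ConjAct.toConjAct.toEquiv (fun a => by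
      rw [Subgroup.centralizer_eq_comap_stabilizer]; exact Iff.rfl))
  have h2 : Nat.card (ConjClasses.mk g).carrier
      = Nat.card (MulAction.orbit (ConjAct G) g) := by
    rw [ConjAct.orbit_eq_carrier_conjClasses]
  rw [h1, h2]
  simp only [Nat.card_eq_fintype_card]
  exact MulAction.card_orbit_mul_card_stabilizer_eq_card_group (ConjAct G) g

private lemma aux_card_sub {G : Type*} [Group G] [Finite G] (H : Subgroup G) [H.Normal]
    (K : Subgroup G) (h : H ⊔ K = ⊤) :
    Nat.card K = Nat.card (G ⧸ H) * Nat.card (H.subgroupOf K) := by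
  have h1 : (H.subgroupOf K).index * Nat.card (H.subgroupOf K) = Nat.card K :=
    Subgroup.index_mul_card _
  have h2 : (H.subgroupOf K).index = H.index := by
    have h3 : H.relIndex K = H.relIndex (K ⊔ H) := (Subgroup.relIndex_sup_right K H).symm
    rw [show (H.subgroupOf K).index = H.relIndex K from rfl, h3, sup_comm K H, h,
      Subgroup.relIndex_top_right]
  rw [← h1, h2]; rfl

private def aux_sub_equiv {G : Type*} [Group G] (H K : Subgroup G) :
    ↥(H.subgroupOf K) ≃ {g : G // g ∈ K ∧ g ∈ H} where
  toFun a := ⟨a.1.1, a.1.2, a.2⟩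
  invFun a := ⟨⟨a.1, a.2.1⟩, a.2.2⟩
  left_inv _ := rfl
  right_inv _ := rfl

private lemma aux_top_iff {G : Type*} [Group G] (H : Subgroup G) [H.Normal] (x : G)
    (hgen : Subgroup.zpowers (QuotientGroup.mk x : G ⧸ H) = ⊤) (K : Subgroup G) :
    H ⊔ K = ⊤ ↔ ∃ c ∈ K, (QuotientGroup.mk c : G ⧸ H) = QuotientGroup.mk x := by
  constructor
  · intro h
    have hx : (QuotientGroup.mk x : G ⧸ H) ∈ K.map (QuotientGroup.mk' H) := by
      have h2 : K.map (QuotientGroup.mk' H) = (H ⊔ K).map (QuotientGroup.mk' H) := by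
        rw [Subgroup.map_sup, QuotientGroup.map_mk'_self, bot_sup_eq]
      rw [h2, h]
      exact ⟨x, Subgroup.mem_top x, rfl⟩
    obtain ⟨c, hc, hce⟩ := hx
    exact ⟨c, hc, hce⟩
  · rintro ⟨c, hcK, hc⟩
    have hmap : K.map (QuotientGroup.mk' H) = ⊤ := by
      rw [eq_top_iff, ← hgen, Subgroup.zpowers_le, ← hc]
      exact ⟨c, hcK, rfl⟩
    have h4 := congrArg (Subgroup.comap (QuotientGroup.mk' H)) hmap
    rw [Subgroup.comap_map_eq, QuotientGroup.ker_mk', Subgroup.comap_top] at h4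
    rw [sup_comm, h4]

private lemma aux_count {G : Type*} [Group G] [Fintype G] (p : G → Prop) [DecidablePred p]
    (hp : ∀ a g, p g → p (a * g * a⁻¹)) :
    Nat.card {C : ConjClasses G // ∀ g ∈ C.carrier, p g} * Fintype.card G
      = ∑ s ∈ univ.filter p, Nat.card (Subgroup.centralizer {s} : Subgroup G) := by
  classical
  have hfib : ∑ s ∈ univ.filter p, Nat.card (Subgroup.centralizer {s} : Subgroup G)
      = ∑ C ∈ (univ : Finset (ConjClasses G)),
          ∑ s ∈ (univ.filter p).filter (fun s => ConjClasses.mk s = C),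
            Nat.card (Subgroup.centralizer {s} : Subgroup G) :=
    (Finset.sum_fiberwise_of_maps_to (fun s _ => mem_univ _) _).symm
  rw [hfib]
  have key : ∀ C : ConjClasses G,
      (∑ s ∈ (univ.filter p).filter (fun s => ConjClasses.mk s = C),
          Nat.card (Subgroup.centralizer {s} : Subgroup G))
        = if (∀ g ∈ C.carrier, p g) then Fintype.card G else 0 := by
    intro C
    obtain ⟨g, rfl⟩ := ConjClasses.exists_rep C
    by_cases hC : ∀ h ∈ (ConjClasses.mk g).carrier, p h
    · rw [if_pos hC]
      have hfil : (univ.filter p).filter (fun s => ConjClasses.mk s = ConjClasses.mk g)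
          = (ConjClasses.mk g).carrier.toFinset := by
        ext s
        simp only [mem_filter, mem_univ, true_and, Set.mem_toFinset]
        constructor
        · rintro ⟨-, hs⟩; exact ConjClasses.mem_carrier_iff_mk_eq.2 hs
        · intro hs; exact ⟨hC s hs, ConjClasses.mem_carrier_iff_mk_eq.1 hs⟩
      rw [hfil]
      have hcard : ∀ s ∈ (ConjClasses.mk g).carrier.toFinset,
          Nat.card (Subgroup.centralizer {s} : Subgroup G)
            = Nat.card (Subgroup.centralizer {g} : Subgroup G) := by
        intro s hs
        rw [Set.mem_toFinset, ConjClasses.mem_carrier_iff_mk_eq] at hs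
        have h1 := aux_class_eq s
        have h2 := aux_class_eq g
        rw [hs] at h1
        have hpos : 0 < Nat.card (ConjClasses.mk g).carrier := by
          refine Nat.card_pos_iff.2 ⟨⟨g, ConjClasses.mem_carrier_iff_mk_eq.2 rfl⟩, ?_⟩
          · exact Set.Finite.to_subtype (Set.toFinite _)
        exact Nat.eq_of_mul_eq_mul_left hpos (h1.trans h2.symm)
      rw [Finset.sum_congr rfl hcard, Finset.sum_const, smul_eq_mul]
      have h5 : ((ConjClasses.mk g).carrier.toFinset.card)
          = Nat.card (ConjClasses.mk g).carrier := by
        rw [Set.toFinset_card, Nat.card_eq_fintype_card]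
      rw [h5, ← Nat.card_eq_fintype_card]
      exact aux_class_eq g
    · rw [if_neg hC]
      push_neg at hC
      obtain ⟨h, hh, hph⟩ := hC
      rw [Finset.sum_eq_zero]
      intro s hs
      simp only [mem_filter, mem_univ, true_and] at hs
      obtain ⟨hps, hmk⟩ := hs
      exfalso
      apply hph
      rw [ConjClasses.mem_carrier_iff_mk_eq, ← hmk, eq_comm, ConjClasses.mk_eq_mk_iff_isConj] at hh
      obtain ⟨a, ha⟩ := hh
      have h6 : (a : G) * s * (a : G)⁻¹ = h := mul_inv_eq_iff_eq_mul.2 ha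
      rw [← h6]
      exact hp _ _ hps
  rw [Finset.sum_congr rfl (fun C _ => key C), ← Finset.sum_filter, Finset.sum_const, smul_eq_mul]
  congr 1
  rw [Nat.card_eq_fintype_card, Fintype.card_subtype]

/-- Lemma 2 (principal lemma): if the coset `Hx` generates the cyclic quotient `G/H`,
then the number of conjugacy classes of `G` contained in `Hx` equals the number of
conjugacy classes of `G` contained in `H` whose centralizing subgroup `H·C_G(h)` is
all of `G` (equivalently, which do not split under conjugation by `H`). -/
theorem stmt0 {G : Type*} [Group G] [Finite G] (H : Subgroup G) [H.Normal]
    (hcyc : IsCyclic (G ⧸ H)) (x : G)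
    (hgen : Subgroup.zpowers (QuotientGroup.mk x : G ⧸ H) = ⊤) :
    Nat.card {C : ConjClasses G //
        C.carrier ⊆ {g : G | (QuotientGroup.mk g : G ⧸ H) = QuotientGroup.mk x}} =
    Nat.card {C : ConjClasses G //
        C.carrier ⊆ (H : Set G) ∧
        ∀ g ∈ C.carrier, H ⊔ Subgroup.centralizer {g} = ⊤} := by
  classical
  have instF := Fintype.ofFinite G
  letI : CommGroup (G ⧸ H) := hcyc.commGroup
  -- the quotient map kills conjugation
  have hcomm : ∀ a g : G, (QuotientGroup.mk (a * g * a⁻¹) : G ⧸ H) = QuotientGroup.mk g := by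
    intro a g
    show ((a * g * a⁻¹ : G) : G ⧸ H) = (g : G ⧸ H)
    rw [QuotientGroup.mk_mul, QuotientGroup.mk_mul, QuotientGroup.mk_inv, mul_comm ((a : G ⧸ H)),
      mul_assoc, mul_inv_cancel, mul_one]
  set p1 : G → Prop := fun g => (QuotientGroup.mk g : G ⧸ H) = QuotientGroup.mk x with hp1def
  set p2 : G → Prop := fun g => g ∈ H ∧ H ⊔ Subgroup.centralizer {g} = ⊤ with hp2def
  have hp1inv : ∀ a g, p1 g → p1 (a * g * a⁻¹) := by
    intro a g h
    show (QuotientGroup.mk (a * g * a⁻¹) : G ⧸ H) = QuotientGroup.mk x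
    rw [hcomm]; exact h
  have hp2inv : ∀ a g, p2 g → p2 (a * g * a⁻¹) := by
    rintro a g ⟨hgH, hgtop⟩
    refine ⟨(‹H.Normal›).conj_mem g hgH a, ?_⟩
    obtain ⟨c, hcZ, hc⟩ := (aux_top_iff H x hgen _).1 hgtop
    refine (aux_top_iff H x hgen _).2 ⟨a * c * a⁻¹, ?_, ?_⟩
    · rw [Subgroup.mem_centralizer_singleton_iff] at hcZ ⊢
      have e1 : a * c * a⁻¹ * (a * g * a⁻¹) = a * (c * g) * a⁻¹ := by group
      have e2 : a * g * a⁻¹ * (a * c * a⁻¹) = a * (g * c) * a⁻¹ := by group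
      rw [e1, e2, hcZ]
    · rw [hcomm]; exact hc
  -- reduce both sides to `aux_count` shape
  have e1 : Nat.card {C : ConjClasses G //
        C.carrier ⊆ {g : G | (QuotientGroup.mk g : G ⧸ H) = QuotientGroup.mk x}}
      = Nat.card {C : ConjClasses G // ∀ g ∈ C.carrier, p1 g} :=
    Nat.card_congr (Equiv.subtypeEquivRight (fun C => Iff.rfl))
  have e2 : Nat.card {C : ConjClasses G //
        C.carrier ⊆ (H : Set G) ∧ ∀ g ∈ C.carrier, H ⊔ Subgroup.centralizer {g} = ⊤}
      = Nat.card {C : ConjClasses G // ∀ g ∈ C.carrier, p2 g} :=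
    Nat.card_congr (Equiv.subtypeEquivRight (fun C => by
      constructor
      · rintro ⟨h1, h2⟩ g hg; exact ⟨h1 hg, h2 g hg⟩
      · intro h; exact ⟨fun g hg => (h g hg).1, fun g hg => (h g hg).2⟩))
  rw [e1, e2]
  -- the key counting identity
  have hGpos : 0 < Fintype.card G := Fintype.card_pos
  refine Nat.eq_of_mul_eq_mul_right hGpos ?_
  rw [aux_count p1 hp1inv, aux_count p2 hp2inv]
  -- now prove the sums are equal
  set F1 : Finset G := univ.filter p1 with hF1def
  set FH : Finset G := univ.filter (fun g => g ∈ H) with hFHdef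
  set F2 : Finset G := univ.filter p2 with hF2def
  have hm : ∀ g : G, H ⊔ Subgroup.centralizer {g} = ⊤ →
      Nat.card (Subgroup.centralizer {g} : Subgroup G)
        = Nat.card (G ⧸ H) * (FH.filter (fun y => y * g = g * y)).card := by
    intro g htop
    rw [aux_card_sub H _ htop]
    congr 1
    rw [Nat.card_congr (aux_sub_equiv H (Subgroup.centralizer {g})), Nat.card_eq_fintype_card,
      Fintype.card_subtype]
    congr 1
    ext y
    simp only [mem_filter, mem_univ, true_and, hFHdef, Subgroup.mem_centralizer_singleton_iff,
      and_comm]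
  have step1 : ∑ s ∈ F1, Nat.card (Subgroup.centralizer {s} : Subgroup G)
      = Nat.card (G ⧸ H) * ∑ s ∈ F1, (FH.filter (fun y => y * s = s * y)).card := by
    rw [Finset.mul_sum]
    refine Finset.sum_congr rfl (fun s hs => ?_)
    have hps : p1 s := (Finset.mem_filter.1 hs).2
    exact hm s ((aux_top_iff H x hgen _).2
      ⟨s, Subgroup.mem_centralizer_singleton_iff.2 rfl, hps⟩)
  have step2 : ∑ s ∈ F1, (FH.filter (fun y => y * s = s * y)).card
      = ∑ y ∈ FH, (F1.filter (fun s => y * s = s * y)).card := by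
    simp_rw [Finset.card_filter]
    exact Finset.sum_comm
  have step3 : ∀ y ∈ FH, (F1.filter (fun s => y * s = s * y)).card
      = if H ⊔ Subgroup.centralizer {y} = ⊤
          then (FH.filter (fun w => w * y = y * w)).card else 0 := by
    intro y hy
    have hyH : y ∈ H := (Finset.mem_filter.1 hy).2
    by_cases htop : H ⊔ Subgroup.centralizer {y} = ⊤
    · rw [if_pos htop]
      obtain ⟨c, hcZ, hc⟩ := (aux_top_iff H x hgen _).1 htop
      rw [Subgroup.mem_centralizer_singleton_iff] at hcZ  -- c * y = y * c
      refine Finset.card_nbij' (fun s => s * c⁻¹) (fun w => w * c) ?_ ?_ ?_ ?_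
      · intro s hs
        simp only [Finset.mem_coe, mem_filter, mem_univ, true_and, hF1def, hFHdef] at hs ⊢
        obtain ⟨hs1, hs2⟩ := hs
        have hs1' : (QuotientGroup.mk s : G ⧸ H) = QuotientGroup.mk x := hs1
        constructor
        · rw [← QuotientGroup.eq_one_iff, QuotientGroup.mk_mul, QuotientGroup.mk_inv, hs1', hc,
            mul_inv_cancel]
        · -- (s * c⁻¹) * y = y * (s * c⁻¹)
          have hcy : c⁻¹ * y = y * c⁻¹ := Commute.inv_left hcZ
          calc s * c⁻¹ * y = s * (c⁻¹ * y) := by rw [mul_assoc]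
            _ = s * (y * c⁻¹) := by rw [hcy]
            _ = (s * y) * c⁻¹ := by rw [mul_assoc]
            _ = (y * s) * c⁻¹ := by rw [hs2]
            _ = y * (s * c⁻¹) := by rw [mul_assoc]
      · intro w hw
        simp only [Finset.mem_coe, mem_filter, mem_univ, true_and, hF1def, hFHdef] at hw ⊢
        obtain ⟨hw1, hw2⟩ := hw
        constructor
        · show (QuotientGroup.mk (w * c) : G ⧸ H) = QuotientGroup.mk x
          rw [QuotientGroup.mk_mul, (QuotientGroup.eq_one_iff w).2 hw1, one_mul, hc]
        · -- y * (w * c) = (w * c) * y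
          calc y * (w * c) = (y * w) * c := by rw [mul_assoc]
            _ = (w * y) * c := by rw [hw2]
            _ = w * (y * c) := by rw [mul_assoc]
            _ = w * (c * y) := by rw [hcZ]
            _ = (w * c) * y := by rw [mul_assoc]
      · intro s _; show s * c⁻¹ * c = s; rw [inv_mul_cancel_right]
      · intro w _; show w * c * c⁻¹ = w; rw [mul_inv_cancel_right]
    · rw [if_neg htop, Finset.card_eq_zero, Finset.filter_eq_empty_iff]
      intro s hs hys
      simp only [mem_filter, mem_univ, true_and, hF1def] at hs
      exact htop ((aux_top_iff H x hgen _).2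
        ⟨s, Subgroup.mem_centralizer_singleton_iff.2 hys.symm, hs⟩)
  have step4 : ∑ y ∈ FH, (F1.filter (fun s => y * s = s * y)).card
      = ∑ y ∈ F2, (FH.filter (fun w => w * y = y * w)).card := by
    rw [Finset.sum_congr rfl step3, ← Finset.sum_filter]
    congr 1
    ext y
    simp only [mem_filter, mem_univ, true_and, hF2def, hFHdef, hp2def]
  have step5 : ∑ y ∈ F2, Nat.card (Subgroup.centralizer {y} : Subgroup G)
      = Nat.card (G ⧸ H) * ∑ y ∈ F2, (FH.filter (fun w => w * y = y * w)).card := by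
    rw [Finset.mul_sum]
    refine Finset.sum_congr rfl (fun y hy => ?_)
    exact hm y ((Finset.mem_filter.1 hy).2).2
  rw [step1, step2, step4, ← step5]
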